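/- Let T = (T^0,...,T^{r-1}) be a standard Young r-tableau of total size n with n ∉ T^{r-1}, and let T↺ = (T^{r-1},T^0,...,T^{r-2}) be its 1-shift. Then f_i(T↺) = f_i(T) + 1 for all i = 1,...,n. -/
import Mathlib


namespace Tableaux

/-- Descent of a placement `pos : Fin n → Fin r × ℕ × ℕ` (entry `j+1` ↦ (component, row,
column)) at the (0-indexed) position `j`: entry `j+2` lies strictly below entry `j+1`,
i.e. in a later component, or in the same component and a lower row. -/
def isDescT {n r : ℕ} (pos : Fin n → Fin r × ℕ × ℕ) (j : ℕ) : Prop :=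
  ∃ h : j + 1 < n,
    (pos ⟨j, Nat.lt_of_succ_lt h⟩).1 < (pos ⟨j + 1, h⟩).1 ∨
      ((pos ⟨j, Nat.lt_of_succ_lt h⟩).1 = (pos ⟨j + 1, h⟩).1 ∧
        (pos ⟨j, Nat.lt_of_succ_lt h⟩).2.1 < (pos ⟨j + 1, h⟩).2.1)

instance {n r : ℕ} (pos : Fin n → Fin r × ℕ × ℕ) (j : ℕ) : Decidable (isDescT pos j) := by
  unfold isDescT; exact exists_prop_decidable _

/-- The descent set (0-indexed positions). -/
def DesT {n r : ℕ} (pos : Fin n → Fin r × ℕ × ℕ) : Finset ℕ :=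
  (Finset.range n).filter (isDescT pos)

/-- `dT pos i` : the number of (1-indexed) descents `≥ i`. -/
def dT {n r : ℕ} (pos : Fin n → Fin r × ℕ × ℕ) (i : ℕ) : ℕ :=
  ((DesT pos).filter fun j => i ≤ j + 1).card

/-- `fT pos i` is the paper's `f_{i+1}(T) = r·d_{i+1}(T) + c_{i+1}(T)` (0-indexed `i`),
where `c` is the index of the component containing the entry. -/
def fT {n r : ℕ} (pos : Fin n → Fin r × ℕ × ℕ) (i : Fin n) : ℕ :=
  r * dT pos ((i : ℕ) + 1) + ((pos i).1 : ℕ)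

/-- A standard Young `r`-tableau of shape `Λ = (Λ^0,…,Λ^{r-1})` with entries `1,…,n`:
`pos` records the (component, row, column) of each entry; the filling is a bijection onto
the cells and is increasing along rows and down columns of each component. -/
structure SYTr (n r : ℕ) (Λ : Fin r → YoungDiagram) where
  pos : Fin n → Fin r × ℕ × ℕ
  mem_cells : ∀ i, ((pos i).2.1, (pos i).2.2) ∈ Λ (pos i).1
  inj : Function.Injective pos
  surj : ∀ (k : Fin r) (c : ℕ × ℕ), c ∈ Λ k → ∃ i, pos i = (k, c.1, c.2)
  row_inc : ∀ i j : Fin n, (pos i).1 = (pos j).1 → (pos i).2.1 = (pos j).2.1 →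
    (pos i).2.2 < (pos j).2.2 → i < j
  col_inc : ∀ i j : Fin n, (pos i).1 = (pos j).1 → (pos i).2.2 = (pos j).2.2 →
    (pos i).2.1 < (pos j).2.1 → i < j

end Tableaux

open Tableaux

/-- Indicator that the entry at (0-indexed) position `j` lies in the last component. -/
def wlast (n r : ℕ) (pos : Fin n → Fin r × ℕ × ℕ) (j : ℕ) : ℕ :=
  if h : j < n then (if ((pos ⟨j, h⟩).1 : ℕ) = r - 1 then 1 else 0) else 0

lemma dT_eq_sum {n r : ℕ} (pos : Fin n → Fin r × ℕ × ℕ) (a : ℕ) :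
    dT pos a = ∑ j ∈ Finset.range n, if (isDescT pos j ∧ a ≤ j + 1) then 1 else 0 := by
  rw [dT, DesT, Finset.filter_filter, Finset.card_filter]

lemma val_add_one' {r : ℕ} [NeZero r] (hr : 2 ≤ r) (x : Fin r) :
    ((x + 1 : Fin r) : ℕ) = if (x : ℕ) = r - 1 then 0 else (x : ℕ) + 1 := by
  have h1 : ((1 : Fin r) : ℕ) = 1 := by
    rw [Fin.val_one']; exact Nat.mod_eq_of_lt hr
  rw [Fin.val_add, h1]
  rcases Nat.lt_or_ge ((x : ℕ) + 1) r with h | h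
  · rw [Nat.mod_eq_of_lt h]
    have := x.isLt
    split_ifs with hx <;> omega
  · have hx : (x : ℕ) = r - 1 := by have := x.isLt; omega
    rw [if_pos hx, hx, Nat.sub_add_cancel (by omega), Nat.mod_self]

lemma isDescT_iff {n r : ℕ} (pos : Fin n → Fin r × ℕ × ℕ) {j : ℕ} (h : j + 1 < n) :
    isDescT pos j ↔ ((pos ⟨j, Nat.lt_of_succ_lt h⟩).1 < (pos ⟨j + 1, h⟩).1 ∨
      ((pos ⟨j, Nat.lt_of_succ_lt h⟩).1 = (pos ⟨j + 1, h⟩).1 ∧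
        (pos ⟨j, Nat.lt_of_succ_lt h⟩).2.1 < (pos ⟨j + 1, h⟩).2.1)) :=
  ⟨fun ⟨_, hp⟩ => hp, fun hp => ⟨h, hp⟩⟩

lemma not_isDescT {n r : ℕ} (pos : Fin n → Fin r × ℕ × ℕ) {j : ℕ} (h : ¬ j + 1 < n) :
    ¬ isDescT pos j := fun ⟨h', _⟩ => h h'

/-- Per-position descent bookkeeping under the 1-shift. -/
lemma shift_pointwise {n r : ℕ} [NeZero r] (hr : 2 ≤ r) (hn : 0 < n)
    (pos : Fin n → Fin r × ℕ × ℕ)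
    (hlast : ((pos ⟨n - 1, Nat.sub_lt hn one_pos⟩).1 : ℕ) ≠ r - 1)
    (a j : ℕ) (hj : j < n) :
    ((if (isDescT (fun k => ((pos k).1 + 1, (pos k).2)) j ∧ a ≤ j + 1) then 1 else 0)
      + (if a ≤ j + 1 then wlast n r pos (j + 1) else 0) : ℕ)
    = (if (isDescT pos j ∧ a ≤ j + 1) then 1 else 0)
      + (if a ≤ j + 1 then wlast n r pos j else 0) := by
  by_cases ha : a ≤ j + 1
  · simp only [ha, and_true, if_true]
    by_cases hj1 : j + 1 < n
    · simp only [isDescT_iff (fun k => ((pos k).1 + 1, (pos k).2)) hj1, isDescT_iff pos hj1]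
      simp only [Fin.lt_def, ← Fin.val_eq_val, val_add_one' hr]
      have hw1 : wlast n r pos (j + 1)
          = if ((pos ⟨j + 1, hj1⟩).1 : ℕ) = r - 1 then 1 else 0 := dif_pos hj1
      have hw0 : wlast n r pos j
          = if ((pos ⟨j, Nat.lt_of_succ_lt hj1⟩).1 : ℕ) = r - 1 then 1 else 0 := dif_pos hj
      rw [hw1, hw0]
      have hb1 : ((pos ⟨j, Nat.lt_of_succ_lt hj1⟩).1 : ℕ) < r := Fin.isLt _
      have hb2 : ((pos ⟨j + 1, hj1⟩).1 : ℕ) < r := Fin.isLt _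
      split_ifs <;> first | omega | simp_all
    · have hjn : j = n - 1 := by omega
      have hd1 := not_isDescT (fun k => ((pos k).1 + 1, (pos k).2)) hj1
      have hd2 := not_isDescT pos hj1
      simp only [hd1, hd2, false_and, if_false]
      have hw1 : wlast n r pos (j + 1) = 0 := dif_neg hj1
      have hw0 : wlast n r pos j = 0 := by
        subst hjn
        rw [wlast, dif_pos hj, if_neg hlast]
      rw [hw1, hw0]
  · simp only [ha, and_false, if_false]

lemma shift_index_sum {n a : ℕ} (ha1 : 1 ≤ a) (w : ℕ → ℕ) (hw : w n = 0) :
    ∑ j ∈ Finset.range n, (if a ≤ j + 1 then w (j + 1) else 0)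
    = ∑ j ∈ Finset.range n, (if a ≤ j then w j else 0) := by
  have h := Finset.sum_range_succ' (fun k => if a ≤ k then w k else 0) n
  have h0 : (if a ≤ 0 then w 0 else 0) = 0 := if_neg (by omega)
  have hn : (if a ≤ n then w n else 0) = 0 := by rw [hw]; split_ifs <;> rfl
  rw [Finset.sum_range_succ, hn, add_zero] at h
  rw [h0, add_zero] at h
  exact h.symm

lemma extra_term_sum {n a : ℕ} (ha1 : 1 ≤ a) (han : a - 1 < n) (w : ℕ → ℕ) :
    ∑ j ∈ Finset.range n, (if a ≤ j + 1 then w j else 0)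
    = (∑ j ∈ Finset.range n, (if a ≤ j then w j else 0)) + w (a - 1) := by
  have key : ∀ j, (if a ≤ j + 1 then w j else 0)
      = (if a ≤ j then w j else 0) + (if j = a - 1 then w j else 0) := by
    intro j
    split_ifs <;> first | (exfalso; omega) | simp
  calc ∑ j ∈ Finset.range n, (if a ≤ j + 1 then w j else 0)
      = ∑ j ∈ Finset.range n, ((if a ≤ j then w j else 0) + (if j = a - 1 then w j else 0)) :=
        Finset.sum_congr rfl (fun j _ => key j)
    _ = (∑ j ∈ Finset.range n, (if a ≤ j then w j else 0))
        + ∑ j ∈ Finset.range n, (if j = a - 1 then w j else 0) := Finset.sum_add_distrib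
    _ = (∑ j ∈ Finset.range n, (if a ≤ j then w j else 0)) + w (a - 1) := by
        rw [Finset.sum_ite_eq' (Finset.range n) (a - 1) w, if_pos (Finset.mem_range.mpr han)]

/-- The descent-counting statistic of the 1-shift. -/
lemma dT_shift (n r : ℕ) [NeZero r] (hr : 2 ≤ r) (hn : 0 < n)
    (pos : Fin n → Fin r × ℕ × ℕ)
    (hlast : ((pos ⟨n - 1, Nat.sub_lt hn one_pos⟩).1 : ℕ) ≠ r - 1) (i : Fin n) :
    dT (fun j => ((pos j).1 + 1, (pos j).2)) ((i : ℕ) + 1)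
      = dT pos ((i : ℕ) + 1) + wlast n r pos i := by
  set a := (i : ℕ) + 1 with haa
  have ha1 : 1 ≤ a := by omega
  have han : a - 1 < n := by have := i.isLt; omega
  have hwn : wlast n r pos n = 0 := dif_neg (lt_irrefl n)
  have hsum : dT (fun j => ((pos j).1 + 1, (pos j).2)) a
        + ∑ j ∈ Finset.range n, (if a ≤ j + 1 then wlast n r pos (j + 1) else 0)
      = dT pos a + ∑ j ∈ Finset.range n, (if a ≤ j + 1 then wlast n r pos j else 0) := by
    rw [dT_eq_sum, dT_eq_sum, ← Finset.sum_add_distrib, ← Finset.sum_add_distrib]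
    exact Finset.sum_congr rfl
      (fun j hj => shift_pointwise hr hn pos hlast a j (Finset.mem_range.mp hj))
  rw [shift_index_sum ha1 _ hwn, extra_term_sum ha1 han] at hsum
  have hai : a - 1 = (i : ℕ) := by omega
  rw [hai] at hsum
  omega


open Tableaux in
/-- If `T` is a standard Young `r`-tableau of total size `n` with
`n ∉ T^{r-1}`, and `T↺` is its 1-shift (every component index increases by 1 mod `r`,
cells unchanged), then `f_i(T↺) = f_i(T) + 1` for all `i`. -/
theorem shift_fstat (n r : ℕ) [NeZero r] (Λ : Fin r → YoungDiagram)
    (hcard : ∑ k : Fin r, (Λ k).card = n) (hn : 0 < n) (T : SYTr n r Λ)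
    (hlast : ((T.pos ⟨n - 1, Nat.sub_lt hn one_pos⟩).1 : ℕ) ≠ r - 1) :
    ∀ i : Fin n,
      fT (fun j => ((T.pos j).1 + 1, (T.pos j).2)) i = fT T.pos i + 1 := by
  intro i
  have hr2 : 2 ≤ r := by
    rcases r with _ | _ | r
    · exact absurd rfl (NeZero.ne 0)
    · exact absurd (Nat.lt_one_iff.mp (T.pos ⟨n - 1, Nat.sub_lt hn one_pos⟩).1.isLt) hlast
    · omega
  have hd := dT_shift n r hr2 hn T.pos hlast i
  have hw : wlast n r T.pos i = if ((T.pos i).1 : ℕ) = r - 1 then 1 else 0 := by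
    simp only [wlast, dif_pos i.isLt, Fin.eta]
  rw [fT, fT]
  have hv : (((fun j => ((T.pos j).1 + 1, (T.pos j).2)) i).1 : ℕ)
      = if ((T.pos i).1 : ℕ) = r - 1 then 0 else ((T.pos i).1 : ℕ) + 1 := val_add_one' hr2 _
  rw [hd, hv, hw]
  by_cases hc : ((T.pos i).1 : ℕ) = r - 1
  · rw [if_pos hc, if_pos hc, hc, Nat.mul_add, Nat.mul_one]
    generalize r * dT T.pos ((i : ℕ) + 1) = m
    omega
  · rw [if_neg hc, if_neg hc, Nat.mul_add, Nat.mul_zero]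
    generalize r * dT T.pos ((i : ℕ) + 1) = m
    omega
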